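/- arXiv:0906.2929 — 2 statements merged into one kernel-verified Lean document; each statement's English description precedes it below -/
import Mathlib

section
/- Wick's theorem for Gaussian (Grassmann) moments: if M is a 2n×2n antisymmetric matrix over a commutative ring and ω is the linear functional on the exterior algebra of a 2n-dimensional space determined by ω(e_i ∧ e_j) = M_{ij} for i<j extended by the Pfaffian rule, then ω(e_{i₁} ∧ ⋯ ∧ e_{i_{2k}}) = Pf(M|_{i₁,…,i_{2k}}), the Pfaffian of the submatrix of M on the rows and columns i₁ < ⋯ < i_{2k}. -/
open Matrix

/-- The Pfaffian of an antisymmetric `2k x 2k` matrix as a sum over perfect matchings: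
each perfect matching is encoded by the unique permutation `s` with
`s(0) < s(1), s(2) < s(3), ...` (ordered pairs) and `s(0) < s(2) < s(4) < ...`
(ordered list of pairs), and contributes `sgn(s) * prod_i A_{s(2i), s(2i+1)}`. -/
def pfMatchings {R : Type*} [CommRing R] {k : ℕ}
    (A : Matrix (Fin (2 * k)) (Fin (2 * k)) R) : R :=
  ∑ σ ∈ Finset.univ.filter (fun σ : Equiv.Perm (Fin (2 * k)) =>
      (∀ i : Fin k, σ ⟨2 * (i : ℕ), by omega⟩ < σ ⟨2 * (i : ℕ) + 1, by omega⟩) ∧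
      (∀ i j : Fin k, i < j →
        σ ⟨2 * (i : ℕ), by omega⟩ < σ ⟨2 * (j : ℕ), by omega⟩)),
    ((Equiv.Perm.sign σ : ℤ) : R) *
      ∏ i : Fin k, A (σ ⟨2 * (i : ℕ), by omega⟩) (σ ⟨2 * (i : ℕ) + 1, by omega⟩)

section WickAux

open Equiv Equiv.Perm

variable {n : ℕ}

/-- Extend a permutation of `Fin n` to `Fin (n+2)` fixing `0` and `1`. -/
def wickExt (τ : Perm (Fin n)) : Perm (Fin (n + 2)) :=
  Equiv.Perm.decomposeFin.symm (0, Equiv.Perm.decomposeFin.symm (0, τ))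

/-- The cycle `0 ↦ 0, 1 ↦ j+1, t ↦ t-1` for `2 ≤ t ≤ j+1`. -/
def wickCyc (j : Fin (n + 1)) : Perm (Fin (n + 2)) :=
  Equiv.Perm.decomposeFin.symm (0, (Fin.cycleRange j).symm)

@[simp] lemma wickExt_zero (τ : Perm (Fin n)) : wickExt τ 0 = 0 :=
  Equiv.Perm.decomposeFin_symm_apply_zero _ _

@[simp] lemma wickExt_succ (τ : Perm (Fin n)) (t : Fin (n+1)) :
    wickExt τ t.succ = (Equiv.Perm.decomposeFin.symm (0, τ) t).succ := by
  rw [wickExt, Equiv.Perm.decomposeFin_symm_apply_succ, Equiv.swap_self]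
  rfl

@[simp] lemma wickExt_one (τ : Perm (Fin n)) : wickExt τ 1 = 1 := by
  rw [← Fin.succ_zero_eq_one, wickExt_succ, Equiv.Perm.decomposeFin_symm_apply_zero,
    Fin.succ_zero_eq_one]

@[simp] lemma wickExt_succ_succ (τ : Perm (Fin n)) (t : Fin n) :
    wickExt τ t.succ.succ = (τ t).succ.succ := by
  rw [wickExt_succ, Equiv.Perm.decomposeFin_symm_apply_succ, Equiv.swap_self]
  rfl

@[simp] lemma sign_wickExt (τ : Perm (Fin n)) : sign (wickExt τ) = sign τ := by
  rw [wickExt, Equiv.Perm.decomposeFin.symm_sign, Equiv.Perm.decomposeFin.symm_sign]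
  simp

@[simp] lemma wickCyc_zero (j : Fin (n + 1)) : wickCyc j 0 = 0 :=
  Equiv.Perm.decomposeFin_symm_apply_zero _ _

@[simp] lemma wickCyc_succ (j : Fin (n + 1)) (t : Fin (n + 1)) :
    wickCyc j t.succ = ((Fin.cycleRange j).symm t).succ := by
  rw [wickCyc, Equiv.Perm.decomposeFin_symm_apply_succ, Equiv.swap_self]
  rfl

@[simp] lemma wickCyc_one (j : Fin (n + 1)) : wickCyc j 1 = j.succ := by
  rw [← Fin.succ_zero_eq_one, wickCyc_succ, Fin.cycleRange_symm_zero]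

@[simp] lemma sign_wickCyc (j : Fin (n + 1)) : sign (wickCyc j) = (-1) ^ (j : ℕ) := by
  rw [wickCyc, Equiv.Perm.decomposeFin.symm_sign, Equiv.Perm.sign_symm, Fin.sign_cycleRange]
  simp

/-- The matching of `Fin (n+2)` pairing `0` with `j+1` and the rest according to `τ`. -/
def wickPhi (j : Fin (n + 1)) (τ : Perm (Fin n)) : Perm (Fin (n + 2)) :=
  wickCyc j * wickExt τ

@[simp] lemma wickPhi_zero (j : Fin (n + 1)) (τ : Perm (Fin n)) : wickPhi j τ 0 = 0 := by
  simp [wickPhi, Equiv.Perm.mul_apply]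

@[simp] lemma wickPhi_one (j : Fin (n + 1)) (τ : Perm (Fin n)) : wickPhi j τ 1 = j.succ := by
  simp [wickPhi, Equiv.Perm.mul_apply]

@[simp] lemma wickPhi_succ_succ (j : Fin (n + 1)) (τ : Perm (Fin n)) (t : Fin n) :
    wickPhi j τ t.succ.succ = (j.succAbove (τ t)).succ := by
  simp [wickPhi, Equiv.Perm.mul_apply, Fin.cycleRange_symm_succ]

@[simp] lemma sign_wickPhi (j : Fin (n + 1)) (τ : Perm (Fin n)) :
    sign (wickPhi j τ) = (-1) ^ (j : ℕ) * sign τ := by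
  simp [wickPhi]

def wickStrip (e : Perm (Fin (n + 2))) : Perm (Fin n) :=
  (Equiv.Perm.decomposeFin ((Equiv.Perm.decomposeFin e).2)).2

@[simp] lemma wickStrip_wickExt (τ : Perm (Fin n)) : wickStrip (wickExt τ) = τ := by
  simp [wickStrip, wickExt]

lemma decomp_of_fix0 (e : Perm (Fin (n + 1))) (h : e 0 = 0) :
    e = Equiv.Perm.decomposeFin.symm (0, (Equiv.Perm.decomposeFin e).2) := by
  have h1 : (Equiv.Perm.decomposeFin e).1 = 0 := by
    rw [← h]
    conv_rhs => rw [← Equiv.symm_apply_apply Equiv.Perm.decomposeFin e,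
      ← Prod.mk.eta (p := Equiv.Perm.decomposeFin e),
      Equiv.Perm.decomposeFin_symm_apply_zero]
  conv_lhs => rw [← Equiv.symm_apply_apply Equiv.Perm.decomposeFin e,
    ← Prod.mk.eta (p := Equiv.Perm.decomposeFin e), h1]

lemma wickExt_wickStrip (e : Perm (Fin (n + 2))) (h0 : e 0 = 0) (h1 : e 1 = 1) :
    wickExt (wickStrip e) = e := by
  have hf0 : (Equiv.Perm.decomposeFin e).2 0 = 0 := by
    have h2 : ((Equiv.Perm.decomposeFin e).2 0).succ = 1 := by
      conv_rhs => rw [← h1]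
      conv_rhs => rw [decomp_of_fix0 e h0]
      rw [Equiv.Perm.decomposeFin_symm_apply_one, Equiv.swap_self]
      rfl
    apply Fin.succ_injective
    rw [h2, Fin.succ_zero_eq_one]
  rw [wickExt, wickStrip]
  conv_rhs => rw [decomp_of_fix0 e h0, decomp_of_fix0 _ hf0]

lemma wickPhi_mk_zero (j : Fin (n + 1)) (τ : Perm (Fin n)) (t : ℕ) (h : t < n + 2)
    (ht : t = 0) : wickPhi j τ ⟨t, h⟩ = 0 := by
  subst ht
  have : (⟨0, h⟩ : Fin (n + 2)) = 0 := rfl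
  rw [this, wickPhi_zero]

lemma wickPhi_mk_one (j : Fin (n + 1)) (τ : Perm (Fin n)) (t : ℕ) (h : t < n + 2)
    (ht : t = 1) : wickPhi j τ ⟨t, h⟩ = j.succ := by
  subst ht
  have : (⟨1, h⟩ : Fin (n + 2)) = 1 := rfl
  rw [this, wickPhi_one]

lemma wickPhi_mk_two (j : Fin (n + 1)) (τ : Perm (Fin n)) (t : ℕ) (h : t < n + 2)
    (s : ℕ) (hs : s < n) (hts : t = s + 2) :
    wickPhi j τ ⟨t, h⟩ = (j.succAbove (τ ⟨s, hs⟩)).succ := by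
  subst hts
  have : (⟨s + 2, h⟩ : Fin (n + 2)) = (⟨s, hs⟩ : Fin n).succ.succ := rfl
  rw [this, wickPhi_succ_succ]

end WickAux

section PfRec

open Equiv Equiv.Perm

def pfAux {R : Type*} [CommRing R] (k : ℕ)
    (A : Matrix (Fin (2 * k + 2)) (Fin (2 * k + 2)) R) : R :=
  ∑ σ ∈ Finset.univ.filter (fun σ : Equiv.Perm (Fin (2 * k + 2)) =>
      (∀ i : Fin (k + 1), σ ⟨2 * (i : ℕ), by omega⟩ < σ ⟨2 * (i : ℕ) + 1, by omega⟩) ∧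
      (∀ i j : Fin (k + 1), i < j →
        σ ⟨2 * (i : ℕ), by omega⟩ < σ ⟨2 * (j : ℕ), by omega⟩)),
    ((Equiv.Perm.sign σ : ℤ) : R) *
      ∏ i : Fin (k + 1), A (σ ⟨2 * (i : ℕ), by omega⟩) (σ ⟨2 * (i : ℕ) + 1, by omega⟩)

lemma pfMatchings_eq_pfAux {R : Type*} [CommRing R] (k : ℕ)
    (A : Matrix (Fin (2 * (k + 1))) (Fin (2 * (k + 1))) R) :
    pfMatchings A = pfAux k A := rfl

lemma wickPhi_pred_iff (k : ℕ) (j : Fin (2 * k + 1)) (τ : Perm (Fin (2 * k))) :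
    ((∀ i : Fin (k + 1), wickPhi j τ ⟨2 * (i : ℕ), by omega⟩ <
        wickPhi j τ ⟨2 * (i : ℕ) + 1, by omega⟩) ∧
      (∀ i i' : Fin (k + 1), i < i' →
        wickPhi j τ ⟨2 * (i : ℕ), by omega⟩ < wickPhi j τ ⟨2 * (i' : ℕ), by omega⟩))
    ↔ ((∀ i : Fin k, τ ⟨2 * (i : ℕ), by omega⟩ < τ ⟨2 * (i : ℕ) + 1, by omega⟩) ∧
      (∀ i i' : Fin k, i < i' →
        τ ⟨2 * (i : ℕ), by omega⟩ < τ ⟨2 * (i' : ℕ), by omega⟩)) := by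
  constructor
  · rintro ⟨h1, h2⟩
    constructor
    · intro i
      have := h1 i.succ
      rw [wickPhi_mk_two j τ (2 * ((i.succ : Fin (k+1)) : ℕ)) (by omega) (2 * (i : ℕ))
            (by omega) (by rw [Fin.val_succ]; ring),
          wickPhi_mk_two j τ (2 * ((i.succ : Fin (k+1)) : ℕ) + 1) (by omega) (2 * (i : ℕ) + 1)
            (by omega) (by rw [Fin.val_succ]; ring)] at this
      rwa [Fin.succ_lt_succ_iff, Fin.succAbove_lt_succAbove_iff] at this
    · intro i i' hlt
      have := h2 i.succ i'.succ (by rwa [Fin.succ_lt_succ_iff])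
      rw [wickPhi_mk_two j τ (2 * ((i.succ : Fin (k+1)) : ℕ)) (by omega) (2 * (i : ℕ))
            (by omega) (by rw [Fin.val_succ]; ring),
          wickPhi_mk_two j τ (2 * ((i'.succ : Fin (k+1)) : ℕ)) (by omega) (2 * (i' : ℕ))
            (by omega) (by rw [Fin.val_succ]; ring)] at this
      rwa [Fin.succ_lt_succ_iff, Fin.succAbove_lt_succAbove_iff] at this
  · rintro ⟨h1, h2⟩
    constructor
    · intro i
      rcases Fin.eq_zero_or_eq_succ i with rfl | ⟨i₀, rfl⟩
      · rw [wickPhi_mk_zero j τ (2 * ((0 : Fin (k+1)) : ℕ)) (by omega) (by simp),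
            wickPhi_mk_one j τ (2 * ((0 : Fin (k+1)) : ℕ) + 1) (by omega) (by simp)]
        exact Fin.succ_pos j
      · rw [wickPhi_mk_two j τ (2 * ((i₀.succ : Fin (k+1)) : ℕ)) (by omega) (2 * (i₀ : ℕ))
              (by omega) (by rw [Fin.val_succ]; ring),
            wickPhi_mk_two j τ (2 * ((i₀.succ : Fin (k+1)) : ℕ) + 1) (by omega)
              (2 * (i₀ : ℕ) + 1) (by omega) (by rw [Fin.val_succ]; ring)]
        rw [Fin.succ_lt_succ_iff, Fin.succAbove_lt_succAbove_iff]
        exact h1 i₀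
    · intro i i' hlt
      rcases Fin.eq_zero_or_eq_succ i' with rfl | ⟨i₀', rfl⟩
      · exact absurd hlt (by simp)
      rcases Fin.eq_zero_or_eq_succ i with rfl | ⟨i₀, rfl⟩
      · rw [wickPhi_mk_zero j τ (2 * ((0 : Fin (k+1)) : ℕ)) (by omega) (by simp),
            wickPhi_mk_two j τ (2 * ((i₀'.succ : Fin (k+1)) : ℕ)) (by omega) (2 * (i₀' : ℕ))
              (by omega) (by rw [Fin.val_succ]; ring)]
        exact Fin.succ_pos _
      · rw [wickPhi_mk_two j τ (2 * ((i₀.succ : Fin (k+1)) : ℕ)) (by omega) (2 * (i₀ : ℕ))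
              (by omega) (by rw [Fin.val_succ]; ring),
            wickPhi_mk_two j τ (2 * ((i₀'.succ : Fin (k+1)) : ℕ)) (by omega) (2 * (i₀' : ℕ))
              (by omega) (by rw [Fin.val_succ]; ring)]
        rw [Fin.succ_lt_succ_iff, Fin.succAbove_lt_succAbove_iff]
        exact h2 i₀ i₀' (by rwa [Fin.succ_lt_succ_iff] at hlt)

lemma wick_sigma_zero (k : ℕ) (σ : Perm (Fin (2 * k + 2)))
    (h1 : ∀ i : Fin (k + 1), σ ⟨2 * (i : ℕ), by omega⟩ < σ ⟨2 * (i : ℕ) + 1, by omega⟩)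
    (h2 : ∀ i i' : Fin (k + 1), i < i' →
      σ ⟨2 * (i : ℕ), by omega⟩ < σ ⟨2 * (i' : ℕ), by omega⟩) :
    σ 0 = 0 := by
  have h00 : (0 : Fin (2 * k + 2)) = ⟨2 * ((⟨0, by omega⟩ : Fin (k + 1)) : ℕ), by omega⟩ := by
    apply Fin.ext; simp
  have key : ∀ u : Fin (2 * k + 2), σ 0 ≤ σ u := by
    intro u
    rcases Nat.even_or_odd (u : ℕ) with ⟨c, hc⟩ | ⟨c, hc⟩
    · have hck : c < k + 1 := by omega
      have hu' : u = ⟨2 * ((⟨c, hck⟩ : Fin (k + 1)) : ℕ), by omega⟩ := by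
        apply Fin.ext; simp; omega
      rcases Nat.eq_zero_or_pos c with rfl | hc1
      · have : u = 0 := by apply Fin.ext; simp; omega
        rw [this]
      · rw [h00, hu']
        exact le_of_lt (h2 ⟨0, by omega⟩ ⟨c, hck⟩ (by simp [Fin.lt_def]; omega))
    · have hck : c < k + 1 := by omega
      have hu' : u = ⟨2 * ((⟨c, hck⟩ : Fin (k + 1)) : ℕ) + 1, by omega⟩ := by
        apply Fin.ext; simp; omega
      rw [h00, hu']
      rcases Nat.eq_zero_or_pos c with rfl | hc1
      · exact le_of_lt (h1 ⟨0, by omega⟩)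
      · exact le_of_lt (lt_trans (h2 ⟨0, by omega⟩ ⟨c, hck⟩ (by simp [Fin.lt_def]; omega))
          (h1 ⟨c, hck⟩))
  have hle : σ 0 ≤ 0 := by
    have := key (σ.symm 0)
    rwa [Equiv.apply_symm_apply] at this
  exact le_antisymm hle (Fin.zero_le _)

lemma wick_sigma_one_ne (k : ℕ) (σ : Perm (Fin (2 * k + 2)))
    (h1 : ∀ i : Fin (k + 1), σ ⟨2 * (i : ℕ), by omega⟩ < σ ⟨2 * (i : ℕ) + 1, by omega⟩)
    (h2 : ∀ i i' : Fin (k + 1), i < i' →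
      σ ⟨2 * (i : ℕ), by omega⟩ < σ ⟨2 * (i' : ℕ), by omega⟩) :
    σ 1 ≠ 0 := by
  intro e
  have h0 : σ 0 = 0 := wick_sigma_zero k σ h1 h2
  have : (1 : Fin (2 * k + 2)) = 0 := σ.injective (by rw [e, h0])
  simp at this

end PfRec

section PfRec2

open Equiv Equiv.Perm

lemma wickPhi_value {R : Type*} [CommRing R] (k : ℕ)
    (A : Matrix (Fin (2 * k + 2)) (Fin (2 * k + 2)) R)
    (j : Fin (2 * k + 1)) (τ : Perm (Fin (2 * k))) :
    ((Equiv.Perm.sign (wickPhi j τ) : ℤ) : R) *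
        ∏ i : Fin (k + 1), A (wickPhi j τ ⟨2 * (i : ℕ), by omega⟩)
          (wickPhi j τ ⟨2 * (i : ℕ) + 1, by omega⟩)
      = (-1 : R) ^ (j : ℕ) * A 0 j.succ *
        (((Equiv.Perm.sign τ : ℤ) : R) *
          ∏ i : Fin k, A ((j.succAbove (τ ⟨2 * (i : ℕ), by omega⟩)).succ)
            ((j.succAbove (τ ⟨2 * (i : ℕ) + 1, by omega⟩)).succ)) := by
  rw [sign_wickPhi, Fin.prod_univ_succ]
  rw [wickPhi_mk_zero j τ (2 * ((0 : Fin (k+1)) : ℕ)) (by omega) (by simp),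
      wickPhi_mk_one j τ (2 * ((0 : Fin (k+1)) : ℕ) + 1) (by omega) (by simp)]
  have htail : (∏ i : Fin k, A (wickPhi j τ ⟨2 * ((i.succ : Fin (k+1)) : ℕ), by omega⟩)
        (wickPhi j τ ⟨2 * ((i.succ : Fin (k+1)) : ℕ) + 1, by omega⟩))
      = ∏ i : Fin k, A ((j.succAbove (τ ⟨2 * (i : ℕ), by omega⟩)).succ)
          ((j.succAbove (τ ⟨2 * (i : ℕ) + 1, by omega⟩)).succ) := by
    refine Finset.prod_congr rfl fun i _ => ?_
    rw [wickPhi_mk_two j τ (2 * ((i.succ : Fin (k+1)) : ℕ)) (by omega) (2 * (i : ℕ))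
          (by omega) (by rw [Fin.val_succ]; ring),
        wickPhi_mk_two j τ (2 * ((i.succ : Fin (k+1)) : ℕ) + 1) (by omega) (2 * (i : ℕ) + 1)
          (by omega) (by rw [Fin.val_succ]; ring)]
  rw [htail]
  push_cast [Units.val_mul]
  ring

lemma pfAux_rec {R : Type*} [CommRing R] (k : ℕ)
    (A : Matrix (Fin (2 * k + 2)) (Fin (2 * k + 2)) R) :
    pfAux k A = ∑ j : Fin (2 * k + 1), (-1 : R) ^ (j : ℕ) * A 0 j.succ *
      pfMatchings (A.submatrix (fun i : Fin (2 * k) => (j.succAbove i).succ)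
        (fun i : Fin (2 * k) => (j.succAbove i).succ)) := by
  rw [pfAux]
  conv_rhs =>
    enter [2, j]
    rw [pfMatchings, Finset.mul_sum]
    simp only [Matrix.submatrix_apply]
  rw [Finset.sum_sigma']
  refine (Finset.sum_bij'
    (fun (p : Σ _ : Fin (2 * k + 1), Equiv.Perm (Fin (2 * k))) _ => wickPhi p.1 p.2)
    (fun σ hσ => ⟨((σ 1).pred (wick_sigma_one_ne k σ (Finset.mem_filter.mp hσ).2.1
        (Finset.mem_filter.mp hσ).2.2)),
      wickStrip ((wickCyc ((σ 1).pred (wick_sigma_one_ne k σ (Finset.mem_filter.mp hσ).2.1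
        (Finset.mem_filter.mp hσ).2.2)))⁻¹ * σ)⟩)
    ?_ ?_ ?_ ?_ ?_).symm
  · -- maps into the filter set
    rintro ⟨j, τ⟩ hp
    rw [Finset.mem_sigma] at hp
    have hτ := (Finset.mem_filter.mp hp.2).2
    exact Finset.mem_filter.mpr ⟨Finset.mem_univ _, (wickPhi_pred_iff k j τ).mpr hτ⟩
  · -- maps into the sigma set
    intro σ hσ
    rw [Finset.mem_sigma]
    refine ⟨Finset.mem_univ _, ?_⟩
    have hσ0 : σ 0 = 0 := wick_sigma_zero k σ (Finset.mem_filter.mp hσ).2.1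
      (Finset.mem_filter.mp hσ).2.2
    have key : ∀ hne : σ 1 ≠ 0, wickStrip ((wickCyc ((σ 1).pred hne))⁻¹ * σ) ∈
        Finset.univ.filter (fun τ : Equiv.Perm (Fin (2 * k)) =>
          (∀ i : Fin k, τ ⟨2 * (i : ℕ), by omega⟩ < τ ⟨2 * (i : ℕ) + 1, by omega⟩) ∧
          (∀ i j : Fin k, i < j →
            τ ⟨2 * (i : ℕ), by omega⟩ < τ ⟨2 * (j : ℕ), by omega⟩)) := by
      intro hne
      have he0 : ((wickCyc ((σ 1).pred hne))⁻¹ * σ) 0 = 0 := by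
        rw [Equiv.Perm.mul_apply, hσ0]
        rw [Equiv.Perm.inv_eq_iff_eq, wickCyc_zero]
      have he1 : ((wickCyc ((σ 1).pred hne))⁻¹ * σ) 1 = 1 := by
        rw [Equiv.Perm.mul_apply]
        rw [Equiv.Perm.inv_eq_iff_eq, wickCyc_one, Fin.succ_pred]
      have hrec : wickPhi ((σ 1).pred hne)
          (wickStrip ((wickCyc ((σ 1).pred hne))⁻¹ * σ)) = σ := by
        rw [wickPhi, wickExt_wickStrip _ he0 he1, mul_inv_cancel_left]
      have hmem := (Finset.mem_filter.mp hσ).2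
      rw [← hrec] at hmem
      exact Finset.mem_filter.mpr ⟨Finset.mem_univ _,
        (wickPhi_pred_iff k ((σ 1).pred hne) _).mp hmem⟩
    exact key _
  · -- left inverse
    rintro ⟨j, τ⟩ hp
    dsimp only
    have hj : ∀ hne : wickPhi j τ 1 ≠ 0, (wickPhi j τ 1).pred hne = j := by
      intro hne
      apply Fin.succ_injective
      rw [Fin.succ_pred, wickPhi_one]
    rw [hj]
    have hstrip : wickStrip ((wickCyc j)⁻¹ * wickPhi j τ) = τ := by
      rw [wickPhi, inv_mul_cancel_left, wickStrip_wickExt]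
    rw [hstrip]
  · -- right inverse
    intro σ hσ
    dsimp only
    have hσ0 : σ 0 = 0 := wick_sigma_zero k σ (Finset.mem_filter.mp hσ).2.1
      (Finset.mem_filter.mp hσ).2.2
    have key : ∀ hne : σ 1 ≠ 0,
        wickPhi ((σ 1).pred hne) (wickStrip ((wickCyc ((σ 1).pred hne))⁻¹ * σ)) = σ := by
      intro hne
      have he0 : ((wickCyc ((σ 1).pred hne))⁻¹ * σ) 0 = 0 := by
        rw [Equiv.Perm.mul_apply, hσ0, Equiv.Perm.inv_eq_iff_eq, wickCyc_zero]
      have he1 : ((wickCyc ((σ 1).pred hne))⁻¹ * σ) 1 = 1 := by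
        rw [Equiv.Perm.mul_apply, Equiv.Perm.inv_eq_iff_eq, wickCyc_one, Fin.succ_pred]
      rw [wickPhi, wickExt_wickStrip _ he0 he1, mul_inv_cancel_left]
    exact key _
  · -- values agree
    rintro ⟨j, τ⟩ hp
    exact (wickPhi_value k A j τ).symm

end PfRec2

section Main

lemma pfMatchings_zero {R : Type*} [CommRing R] (A : Matrix (Fin (2 * 0)) (Fin (2 * 0)) R) :
    pfMatchings A = 1 := by
  rw [pfMatchings]
  rw [Finset.sum_eq_single (1 : Equiv.Perm (Fin (2 * 0)))]
  · simp
  · intro σ hσ hne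
    exact absurd (Equiv.ext fun i => i.elim0) hne
  · intro h
    exact absurd (Finset.mem_filter.mpr ⟨Finset.mem_univ _,
      ⟨fun i => i.elim0, fun i j _ => i.elim0⟩⟩) h

lemma val_succAbove' {n : ℕ} (j : Fin (n + 1)) (i : Fin n) :
    (j.succAbove i : ℕ) = if (i : ℕ) < (j : ℕ) then (i : ℕ) else (i : ℕ) + 1 := by
  rcases lt_or_ge (i : ℕ) (j : ℕ) with h | h
  · rw [Fin.succAbove_of_castSucc_lt _ _ (by simp [Fin.lt_def, h]), if_pos h]; simp
  · rw [Fin.succAbove_of_le_castSucc _ _ (by simp [Fin.le_def, h]), if_neg (not_lt.2 h)]; simp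

lemma eraseIdx_ofFn {α : Type*} {n : ℕ} (f : Fin (n + 1) → α) (j : Fin (n + 1)) :
    (List.ofFn f).eraseIdx (j : ℕ) = List.ofFn (fun i : Fin n => f (j.succAbove i)) := by
  apply List.ext_getElem
  · simp [List.length_eraseIdx]; omega
  · intro t h1 h2
    rw [List.getElem_eraseIdx]
    have hlen : t < n := by simpa using h2
    split
    · next h' =>
      rw [List.getElem_ofFn, List.getElem_ofFn]
      congr 1
      apply Fin.ext
      rw [val_succAbove']
      simp [if_pos h']
    · next h' =>
      rw [List.getElem_ofFn, List.getElem_ofFn]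
      congr 1
      apply Fin.ext
      rw [val_succAbove']
      simp [if_neg h']

lemma fin_sum_cast {β : Type*} [AddCommMonoid β] {a b : ℕ} (h : a = b) (f : Fin a → β) :
    ∑ i : Fin a, f i = ∑ i : Fin b, f (Fin.cast h.symm i) := by
  subst h; rfl

lemma wick_aux {R : Type*} [CommRing R] {m : ℕ} (M : Matrix (Fin m) (Fin m) R)
    (ω : List (Fin m) → R)
    (hω0 : ω [] = 1)
    (hωrec : ∀ (a : Fin m) (l : List (Fin m)),
      ω (a :: l) = ∑ j : Fin l.length,
        (-1 : R) ^ (j : ℕ) * M a (l.get j) * ω (l.eraseIdx (j : ℕ))) :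
    ∀ k (l : Fin (2 * k) → Fin m), StrictMono l →
      ω (List.ofFn l) = pfMatchings (M.submatrix l l) := by
  intro k
  induction k with
  | zero =>
    intro l hl
    have h0 : List.ofFn l = [] := List.ofFn_zero (f := l)
    rw [h0, hω0, pfMatchings_zero]
  | succ k ih =>
    intro l hl
    have hofn : List.ofFn l = l 0 :: List.ofFn (fun i : Fin (2 * k + 1) => l i.succ) :=
      List.ofFn_succ (f := l)
    rw [hofn, hωrec]
    rw [fin_sum_cast (show (List.ofFn (fun i : Fin (2 * k + 1) => l i.succ)).length = 2 * k + 1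
      by simp)]
    rw [pfMatchings_eq_pfAux k (M.submatrix l l), pfAux_rec]
    refine Finset.sum_congr rfl fun j _ => ?_
    have hget : ∀ t : Fin ((List.ofFn (fun i : Fin (2 * k + 1) => l i.succ)).length),
        (t : ℕ) = (j : ℕ) →
        (List.ofFn (fun i : Fin (2 * k + 1) => l i.succ)).get t = l j.succ := by
      intro t ht
      rw [List.get_ofFn]
      congr 1
      apply Fin.ext
      simp [ht]
    simp only [Fin.coe_cast]
    rw [hget _ (by simp)]
    rw [eraseIdx_ofFn (fun i : Fin (2 * k + 1) => l i.succ) j]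
    have hmono : StrictMono (fun i : Fin (2 * k) => l ((j.succAbove i).succ)) :=
      fun a b hab => hl (Fin.succ_lt_succ_iff.mpr (Fin.strictMono_succAbove j hab))
    rw [show (List.ofFn fun i : Fin (2 * k) =>
        (fun i' : Fin (2 * k + 1) => l i'.succ) (j.succAbove i))
      = List.ofFn (fun i : Fin (2 * k) => l ((j.succAbove i).succ)) from rfl]
    rw [ih _ hmono]
    rfl

end Main


/-- Wick's theorem for Gaussian (Grassmann) moments: let `M` be an antisymmetric
matrix over a commutative ring and let `omega` be the functional on monomials
(encoded as lists of indices) determined by `omega(e_i /\ e_j) = M i j` for `i < j`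
and extended by the Pfaffian (Wick expansion) rule
`omega(a :: l) = sum_j (-1)^j * M a (l j) * omega(l with j removed)`.
Then on any increasingly ordered monomial `e_{i_1} /\ ... /\ e_{i_{2k}}`, the value of
`omega` is the Pfaffian of the corresponding `2k x 2k` submatrix of `M`. -/
theorem wick_moments_eq_pfaffian_minor
    {R : Type*} [CommRing R] {m : ℕ} (M : Matrix (Fin m) (Fin m) R)
    (hM : Mᵀ = -M)
    (ω : List (Fin m) → R)
    (hω0 : ω [] = 1)
    (hωrec : ∀ (a : Fin m) (l : List (Fin m)),
      ω (a :: l) = ∑ j : Fin l.length,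
        (-1 : R) ^ (j : ℕ) * M a (l.get j) * ω (l.eraseIdx (j : ℕ)))
    (k : ℕ) (l : Fin (2 * k) → Fin m) (hl : StrictMono l) :
    ω (List.ofFn l) = pfMatchings (M.submatrix l l) :=
  wick_aux M ω hω0 hωrec k l hl
end

section
/- Grassmann convolution theorem: for two polynomials f, f' in 2n Grassmann variables, define the convolution (f ∗ f')(ξ) = ∫ dη f(η) f'(ξ−η) and the Fourier transform (Ff)(ξ) = ∫ dη f(η) exp(Σ_i ξ_i⋆ η_i) (with ⋆ a fixed conjugation on the coefficient algebra). Then F(f ∗ f') = (Ff)·(Ff'). -/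
/-- The ordered monomial `x_I = x_{i_1} * ... * x_{i_k}` associated with a finite
index set `I = {i_1 < ... < i_k}`. -/
def gmonomial {A : Type*} [Ring A] {m : ℕ} (x : Fin m → A) (I : Finset (Fin m)) : A :=
  ((I.sort (· ≤ ·)).map x).prod

/-- Evaluation of the Grassmann polynomial with coefficient family `f` at the
vector `x` of (odd) algebra elements: `f(x) = sum_I f^I x_I`. -/
def gevalP {A : Type*} [Ring A] {m : ℕ} (f : Finset (Fin m) → A) (x : Fin m → A) : A :=
  ∑ I : Finset (Fin m), f I * gmonomial x I

/-- The finite exponential series `sum_{k < N} x^k / k!`. -/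
noncomputable def gexp {A : Type*} [Ring A] [Algebra ℂ A] (N : ℕ) (x : A) : A :=
  ∑ k ∈ Finset.range N, ((k.factorial : ℂ))⁻¹ • x ^ k

namespace GrassmannAux

open Finset

variable {A : Type*} [Ring A] {m : ℕ}

/-- inversion count between two index sets -/
def ginv (S T : Finset (Fin m)) : ℕ := ∑ s ∈ S, (T.filter (· < s)).card

/-- the sign `(-1)^(k choose 2)`, by recursion -/
def gsigma : ℕ → ℤ
  | 0 => 1
  | (s+1) => (-1)^s * gsigma s

lemma gsigma_add (p q : ℕ) : gsigma (p + q) = gsigma p * gsigma q * (-1)^(p*q) := by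
  induction q with
  | zero => simp [gsigma]
  | succ q ih =>
      show gsigma ((p+q)+1) = _
      rw [gsigma, ih, gsigma, Nat.mul_succ, pow_add, pow_add]
      ring

lemma neg_one_pow_eq_of_even_add {x y : ℕ} (h : Even (x + y)) :
    ((-1 : ℤ))^x = (-1)^y := by
  have h1 : ((-1 : ℤ))^(x+y) = 1 := h.neg_one_pow
  have h2 : ((-1 : ℤ))^(y+y) = 1 := (Even.add_self y).neg_one_pow
  calc ((-1:ℤ))^x = (-1)^x * ((-1)^y * (-1)^y) := by rw [← pow_add, h2, mul_one]
    _ = ((-1)^(x+y)) * (-1)^y := by rw [pow_add]; ring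
    _ = (-1)^y := by rw [h1, one_mul]

lemma gmonomial_empty (x : Fin m → A) : gmonomial x ∅ = 1 := by simp [gmonomial]

lemma gmonomial_insert (x : Fin m → A) {a : Fin m} {T : Finset (Fin m)}
    (h : ∀ b ∈ T, a < b) :
    gmonomial x (insert a T) = x a * gmonomial x T := by
  have ha : a ∉ T := fun h' => lt_irrefl a (h a h')
  rw [gmonomial, Finset.sort_insert _ (fun b hb => (h b hb).le) ha]
  simp [gmonomial]

lemma gmonomial_mem {C : Subring A} {x : Fin m → A} (hx : ∀ i, x i ∈ C)
    (S : Finset (Fin m)) : gmonomial x S ∈ C := by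
  refine Subring.list_prod_mem _ ?_
  intro a ha
  rcases List.mem_map.1 ha with ⟨i, _, rfl⟩
  exact hx i

lemma mul_gmonomial {x : Fin m → A} (hx : ∀ i j, x i * x j = -(x j * x i))
    (hx0 : ∀ i, x i * x i = 0) (a : Fin m) (T : Finset (Fin m)) :
    x a * gmonomial x T =
      if a ∈ T then 0 else ((-1 : ℤ)^((T.filter (· < a)).card)) • gmonomial x (insert a T) := by
  induction T using Finset.induction_on_min with
  | empty =>
      simp only [notMem_empty, if_false, filter_empty, card_empty, pow_zero, one_smul,
        LawfulSingleton.insert_empty_eq]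
      simp [gmonomial]
  | insert b T hb ih =>
    rw [gmonomial_insert x hb]
    rcases lt_trichotomy a b with hab | rfl | hab
    · have haT : a ∉ insert b T := by
        simp only [mem_insert]
        rintro (rfl | h')
        · exact lt_irrefl a hab
        · exact absurd (hb a h') (by omega)
      rw [if_neg haT]
      have h1 : ∀ c ∈ insert b T, a < c := by
        intro c hc
        rcases mem_insert.1 hc with rfl | hc
        · exact hab
        · exact hab.trans (hb c hc)
      have hfilt : (insert b T).filter (· < a) = ∅ := by
        refine filter_eq_empty_iff.2 ?_
        intro c hc
        exact not_lt_of_gt (h1 c hc)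
      rw [hfilt]
      simp [gmonomial_insert x h1, gmonomial_insert x hb]
    · rw [if_pos (mem_insert_self a T), ← mul_assoc, hx0, zero_mul]
    · have hab' : b < a := hab
      rw [← mul_assoc, hx a b, neg_mul, mul_assoc, ih]
      by_cases haT : a ∈ T
      · rw [if_pos haT, mul_zero, neg_zero, if_pos (mem_insert_of_mem haT)]
      · have haT' : a ∉ insert b T := by
          simp only [mem_insert]
          rintro (rfl | h')
          · exact lt_irrefl a hab'
          · exact haT h'
        rw [if_neg haT, if_neg haT', mul_smul_comm]
        have hbins : ∀ c ∈ insert a T, b < c := by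
          intro c hc
          rcases mem_insert.1 hc with rfl | hc
          · exact hab'
          · exact hb c hc
        have hfilt : (insert b T).filter (· < a) = insert b (T.filter (· < a)) := by
          rw [filter_insert, if_pos hab']
        have hbnot : b ∉ T.filter (· < a) := fun h' => (hb b (mem_filter.1 h').1).false
        rw [hfilt, card_insert_of_notMem hbnot, Finset.insert_comm,
          gmonomial_insert x hbins, ← neg_smul, pow_succ]
        ring_nf

lemma gmonomial_mul {x : Fin m → A} (hx : ∀ i j, x i * x j = -(x j * x i))
    (hx0 : ∀ i, x i * x i = 0) (S T : Finset (Fin m)) :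
    gmonomial x S * gmonomial x T =
      if Disjoint S T then ((-1:ℤ)^(ginv S T)) • gmonomial x (S ∪ T) else 0 := by
  induction S using Finset.induction_on_min with
  | empty => simp [gmonomial_empty, ginv]
  | insert a S ha ih =>
    have haS : a ∉ S := fun h' => lt_irrefl a (ha a h')
    rw [gmonomial_insert x ha, mul_assoc, ih]
    by_cases hd : Disjoint S T
    · rw [if_pos hd, mul_smul_comm, mul_gmonomial hx hx0]
      by_cases haT : a ∈ T
      · have : ¬ Disjoint (insert a S) T := fun h =>
          (Finset.disjoint_left.1 h (mem_insert_self a S)) haT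
        rw [if_pos (mem_union_right S haT), if_neg this, smul_zero]
      · have haST : a ∉ S ∪ T := by simp [haS, haT]
        have hd' : Disjoint (insert a S) T := by
          rw [disjoint_insert_left]; exact ⟨haT, hd⟩
        rw [if_neg haST, if_pos hd', smul_smul, insert_union]
        congr 1
        have hfilt : (S ∪ T).filter (· < a) = T.filter (· < a) := by
          rw [filter_union]
          have : S.filter (· < a) = ∅ := by
            refine filter_eq_empty_iff.2 fun c hc => not_lt_of_gt (ha c hc)
          rw [this, empty_union]
        rw [hfilt, ← pow_add]
        congr 1
        rw [ginv, ginv, sum_insert haS, add_comm]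
    · have hd' : ¬ Disjoint (insert a S) T := fun h =>
        hd (h.mono_left (subset_insert a S))
      rw [if_neg hd, if_neg hd', mul_zero]

lemma pass_list {x : Fin m → A} {w : A} (h : ∀ i, w * x i = -(x i * w)) :
    ∀ l : List (Fin m), w * (l.map x).prod = ((-1:ℤ)^l.length) • ((l.map x).prod * w)
  | [] => by simp
  | (i :: l) => by
      rw [List.map_cons, List.prod_cons, ← mul_assoc, h i, neg_mul, mul_assoc,
        pass_list h l, List.length_cons, pow_succ, mul_smul_comm,
        mul_comm ((-1:ℤ)^l.length) (-1), mul_smul, neg_one_smul, mul_assoc]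

lemma pass_gmonomial {x : Fin m → A} {w : A} (h : ∀ i, w * x i = -(x i * w))
    (T : Finset (Fin m)) :
    w * gmonomial x T = ((-1:ℤ)^T.card) • (gmonomial x T * w) := by
  rw [gmonomial, ← Finset.length_sort (α := Fin m) (· ≤ ·) (s := T)]
  exact pass_list h _

lemma gmonomial_pass_single {x : Fin m → A} {w : A} (h : ∀ i, w * x i = -(x i * w))
    (T : Finset (Fin m)) :
    gmonomial x T * w = ((-1:ℤ)^T.card) • (w * gmonomial x T) := by
  rw [pass_gmonomial h, smul_smul, ← pow_add]
  rw [Even.neg_one_pow (Even.add_self T.card), one_smul]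

lemma gmonomial_pass {x y : Fin m → A} (h : ∀ i j, x i * y j = -(y j * x i))
    (T S : Finset (Fin m)) :
    gmonomial y T * gmonomial x S
      = ((-1:ℤ)^(T.card * S.card)) • (gmonomial x S * gmonomial y T) := by
  have main : ∀ l : List (Fin m), gmonomial y T * (l.map x).prod
      = ((-1:ℤ)^(T.card * l.length)) • ((l.map x).prod * gmonomial y T) := by
    intro l
    induction l with
    | nil => simp
    | cons i l ih =>
        rw [List.map_cons, List.prod_cons, ← mul_assoc,
          gmonomial_pass_single (fun j => h i j) T, smul_mul_assoc, mul_assoc, ih,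
          mul_smul_comm, smul_smul, ← pow_add, List.length_cons, ← mul_assoc]
        congr 1
        rw [Nat.mul_succ]
        ring
  rw [gmonomial, ← Finset.length_sort (α := Fin m) (· ≤ ·) (s := S)]
  exact main _

lemma ginv_insert_left {a : Fin m} {S : Finset (Fin m)} (haS : a ∉ S) (T : Finset (Fin m)) :
    ginv (insert a S) T = (T.filter (· < a)).card + ginv S T := by
  rw [ginv, sum_insert haS]; rfl

lemma ginv_insert_right {a : Fin m} (S : Finset (Fin m)) {T : Finset (Fin m)} (haT : a ∉ T)
    (h : ∀ b ∈ S, a < b) : ginv S (insert a T) = S.card + ginv S T := by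
  have key : ∀ s ∈ S, ((insert a T).filter (· < s)).card = 1 + (T.filter (· < s)).card := by
    intro s hs
    rw [filter_insert, if_pos (h s hs),
      card_insert_of_notMem (fun hx => haT (mem_filter.1 hx).1)]
    omega
  rw [ginv, ginv, Finset.sum_congr rfl key, Finset.sum_add_distrib, Finset.sum_const,
    smul_eq_mul, mul_one]

lemma ginv_union_left {S S' : Finset (Fin m)} (h : Disjoint S S') (T : Finset (Fin m)) :
    ginv (S ∪ S') T = ginv S T + ginv S' T := by
  rw [ginv, sum_union h]; rfl

lemma ginv_union_right (S : Finset (Fin m)) {T T' : Finset (Fin m)} (h : Disjoint T T') :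
    ginv S (T ∪ T') = ginv S T + ginv S T' := by
  rw [ginv, ginv, ginv, ← sum_add_distrib]
  refine Finset.sum_congr rfl fun s _ => ?_
  rw [filter_union, card_union_of_disjoint (h.mono (filter_subset _ _) (filter_subset _ _))]

lemma gmonomial_sub {u v : Fin m → A} (h : ∀ i j, v i * u j = -(u j * v i))
    (J : Finset (Fin m)) :
    gmonomial (fun i => u i - v i) J
      = ∑ K ∈ J.powerset, ((-1:ℤ)^(K.card + ginv (J \ K) K)) •
          (gmonomial u (J \ K) * gmonomial v K) := by
  induction J using Finset.induction_on_min with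
  | empty => simp [gmonomial_empty, ginv]
  | insert a J ha ih =>
    have haJ : a ∉ J := fun h' => lt_irrefl a (ha a h')
    have hdisj : Disjoint J.powerset (J.powerset.image (insert a)) := by
      rw [Finset.disjoint_left]
      intro K hK hK'
      rcases Finset.mem_image.1 hK' with ⟨K', hK', hKK'⟩
      exact haJ (Finset.mem_powerset.1 hK (hKK' ▸ mem_insert_self a K'))
    have hinj : ∀ K₁ ∈ J.powerset, ∀ K₂ ∈ J.powerset,
        insert a K₁ = insert a K₂ → K₁ = K₂ := by
      intro K₁ h₁ K₂ h₂ hins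
      have ha₁ : a ∉ K₁ := fun hx => haJ (Finset.mem_powerset.1 h₁ hx)
      have ha₂ : a ∉ K₂ := fun hx => haJ (Finset.mem_powerset.1 h₂ hx)
      rw [← Finset.erase_insert ha₁, ← Finset.erase_insert ha₂, hins]
    rw [gmonomial_insert _ ha, ih, powerset_insert, sum_union hdisj, sum_image hinj,
      sub_mul, mul_sum, mul_sum, sub_eq_add_neg, ← Finset.sum_neg_distrib]
    congr 1
    · refine Finset.sum_congr rfl fun K hK => ?_
      have hKJ : K ⊆ J := Finset.mem_powerset.1 hK
      have haK : a ∉ K := fun hx => haJ (hKJ hx)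
      have hBsub : J \ K ⊆ J := sdiff_subset
      have hset : insert a J \ K = insert a (J \ K) := insert_sdiff_of_notMem _ haK
      have hmin : ∀ b ∈ J \ K, a < b := fun b hb => ha b (hBsub hb)
      rw [mul_smul_comm, hset, gmonomial_insert u hmin, mul_assoc]
      congr 2
      have hfilt : (K.filter (· < a)) = ∅ :=
        filter_eq_empty_iff.2 fun c hc => not_lt_of_gt (ha c (hKJ hc))
      have : a ∉ J \ K := fun hx => haJ (hBsub hx)
      rw [ginv_insert_left this, hfilt, card_empty, zero_add]
    · refine Finset.sum_congr rfl fun K hK => ?_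
      have hKJ : K ⊆ J := Finset.mem_powerset.1 hK
      have haK : a ∉ K := fun hx => haJ (hKJ hx)
      have hBsub : J \ K ⊆ J := sdiff_subset
      have hminK : ∀ b ∈ K, a < b := fun b hb => ha b (hKJ hb)
      have hminB : ∀ b ∈ J \ K, a < b := fun b hb => ha b (hBsub hb)
      have hset : insert a J \ insert a K = J \ K := by
        ext x
        by_cases hx : x = a
        · subst hx; simp [haJ]
        · simp [hx]
      have hv : v a * ((-1:ℤ)^(K.card + ginv (J \ K) K) •
            (gmonomial u (J \ K) * gmonomial v K))
          = -(((-1:ℤ)^((insert a K).card + ginv (insert a J \ insert a K) (insert a K))) •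
              (gmonomial u (insert a J \ insert a K) * gmonomial v (insert a K))) := by
        rw [hset, mul_smul_comm, ← mul_assoc, pass_gmonomial (fun i => h a i) (J \ K),
          smul_mul_assoc, smul_smul, mul_assoc, ← gmonomial_insert v hminK,
          card_insert_of_notMem haK, ginv_insert_right _ haK hminB,
          ← pow_add, ← neg_smul]
        congr 1
        have he : K.card + 1 + ((J \ K).card + ginv (J \ K) K)
            = (K.card + ginv (J \ K) K + (J \ K).card) + 1 := by omega
        rw [he, pow_succ, mul_neg_one, neg_neg]
      rw [hv, neg_neg]

lemma sum_pow {x : Fin m → A} (hc : ∀ i j, Commute (x i) (x j))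
    (hx0 : ∀ i, x i * x i = 0) (T : Finset (Fin m)) :
    ∀ k, (∑ i ∈ T, x i)^k = k.factorial • ∑ S ∈ T.powersetCard k, gmonomial x S := by
  induction T using Finset.induction_on_min with
  | empty =>
      intro k
      cases k with
      | zero => simp [gmonomial_empty]
      | succ k =>
          rw [Finset.powersetCard_eq_empty.2 (by simp)]
          simp
  | insert a T ha ih =>
    intro k
    have haT : a ∉ T := fun h' => lt_irrefl a (ha a h')
    have hcomm : Commute (x a) (∑ i ∈ T, x i) :=
      Commute.sum_right _ _ _ fun i _ => hc a i
    have hxa2 : ∀ j, 2 ≤ j → x a ^ j = 0 := by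
      intro j hj
      obtain ⟨r, rfl⟩ : ∃ r, j = 2 + r := ⟨j - 2, by omega⟩
      rw [pow_add, pow_two, hx0, zero_mul]
    cases k with
    | zero => simp [Finset.powersetCard_zero, gmonomial_empty]
    | succ k =>
      rw [sum_insert haT, hcomm.add_pow]
      have hsplit : range (k + 1 + 1) = range 2 ∪ Ico 2 (k + 1 + 1) := by
        rw [range_eq_Ico, ← Finset.Ico_union_Ico_eq_Ico (by omega : 0 ≤ 2) (by omega), ← range_eq_Ico]
      rw [hsplit, sum_union (by
        rw [range_eq_Ico]
        exact Finset.Ico_disjoint_Ico_consecutive 0 2 (k+1+1))]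
      have hzero : ∑ j ∈ Ico 2 (k+1+1), x a ^ j * (∑ i ∈ T, x i)^(k+1-j) * ((k+1).choose j : A) = 0 := by
        refine Finset.sum_eq_zero fun j hj => ?_
        rw [hxa2 j (mem_Ico.1 hj).1, zero_mul, zero_mul]
      rw [hzero, add_zero]
      rw [show (2 : ℕ) = 0 + 1 + 1 from rfl, Finset.sum_range_succ, Finset.sum_range_succ,
        Finset.sum_range_zero, zero_add]
      simp only [pow_zero, one_mul, Nat.sub_zero, Nat.choose_zero_right, Nat.cast_one,
        mul_one, pow_one, Nat.add_sub_cancel, Nat.choose_one_right]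
      rw [ih k, ih (k+1), powersetCard_succ_insert haT, sum_union (by
          rw [Finset.disjoint_left]
          intro S hS hS'
          rcases Finset.mem_image.1 hS' with ⟨S', _, rfl⟩
          exact haT ((Finset.mem_powersetCard.1 hS).1 (mem_insert_self a S')))]
      rw [Finset.sum_image (by
          intro S₁ h₁ S₂ h₂ hins
          have ha₁ : a ∉ S₁ := fun hx => haT ((Finset.mem_powersetCard.1 h₁).1 hx)
          have ha₂ : a ∉ S₂ := fun hx => haT ((Finset.mem_powersetCard.1 h₂).1 hx)
          rw [← Finset.erase_insert ha₁, ← Finset.erase_insert ha₂, hins])]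
      rw [smul_add]
      congr 1
      · have hxins : ∀ S ∈ T.powersetCard k, gmonomial x (insert a S) = x a * gmonomial x S := by
          intro S hS
          exact gmonomial_insert x fun b hb => ha b ((Finset.mem_powersetCard.1 hS).1 hb)
        rw [Finset.sum_congr rfl hxins, ← Finset.mul_sum, mul_smul_comm,
          Nat.factorial_succ, mul_comm (k+1) k.factorial, mul_smul, smul_mul_assoc]
        congr 1
        rw [nsmul_eq_mul, (Nat.cast_commute ((k:ℕ)+1) _).eq]

lemma gexp_sum [Algebra ℂ A] {x : Fin m → A} (hc : ∀ i j, Commute (x i) (x j))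
    (hx0 : ∀ i, x i * x i = 0) {N : ℕ} (hN : m < N) :
    gexp N (∑ i, x i) = ∑ S : Finset (Fin m), gmonomial x S := by
  unfold gexp
  have hterm : ∀ k, ((k.factorial : ℂ))⁻¹ • (∑ i : Fin m, x i) ^ k
      = ∑ S ∈ Finset.powersetCard k (univ : Finset (Fin m)), gmonomial x S := by
    intro k
    rw [sum_pow hc hx0 univ k, ← Nat.cast_smul_eq_nsmul ℂ, smul_smul,
      inv_mul_cancel₀ (by exact_mod_cast k.factorial_ne_zero), one_smul]
  rw [Finset.sum_congr rfl fun k _ => hterm k]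
  have hsub : range ((univ : Finset (Fin m)).card + 1) ⊆ range N := by
    refine Finset.range_subset_range.2 ?_
    have := Finset.card_fin m
    omega
  rw [← Finset.sum_subset hsub (by
    intro k _ hk
    have : (univ : Finset (Fin m)).card < k := by
      simp only [Finset.mem_range, not_lt] at hk
      omega
    rw [Finset.powersetCard_eq_empty.2 this, Finset.sum_empty])]
  rw [← Finset.sum_disjiUnion _ _ ((univ : Finset (Fin m)).pairwise_disjoint_powersetCard.set_pairwise _), ← Finset.powerset_card_disjiUnion, Finset.powerset_univ]

lemma gmonomial_pair {X w : Fin m → A}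
    (hXw : ∀ i j, X i * w j = -(w j * X i)) (S : Finset (Fin m)) :
    gmonomial (fun i => X i * w i) S
      = gsigma S.card • (gmonomial X S * gmonomial w S) := by
  induction S using Finset.induction_on_min with
  | empty => simp [gmonomial_empty, gsigma]
  | insert a S ha ih =>
    have haS : a ∉ S := fun h' => lt_irrefl a (ha a h')
    have hpass : ∀ j, w a * X j = -(X j * w a) := by
      intro j
      rw [eq_comm, neg_eq_iff_eq_neg, ← hXw j a]
    rw [gmonomial_insert _ ha, ih, gmonomial_insert X ha, gmonomial_insert w ha,
      card_insert_of_notMem haS]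
    show (X a * w a) * _ = gsigma (S.card + 1) • _
    rw [mul_smul_comm, mul_assoc, ← mul_assoc (w a), pass_gmonomial hpass S,
      smul_mul_assoc, mul_smul_comm, smul_smul, mul_assoc (gmonomial X S),
      ← mul_assoc (X a), gsigma, mul_comm ((-1:ℤ)^S.card) (gsigma S.card)]

lemma eq_compl_of_disjoint_union {k : ℕ} {B S : Finset (Fin k)}
    (hd : Disjoint B S) (hu : B ∪ S = univ) : S = Bᶜ := by
  have : (B ∪ S) \ B = S := Finset.union_sdiff_cancel_left hd
  rw [hu] at this
  rw [← this, Finset.compl_eq_univ_sdiff]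

lemma central_shuffle {c x₁ x₂ z : A} (hc : ∀ a, c * a = a * c) :
    (x₁ * x₂) * (c * z) = (x₁ * c) * (x₂ * z) := by
  rw [mul_assoc, ← mul_assoc x₂, ← hc x₂, mul_assoc, ← mul_assoc]

lemma berezin_key {A : Type*} [Ring A] [Algebra ℂ A] {n : ℕ} (C : Subring A)
    (X w : Fin (2*n) → A)
    (hw : ∀ i j, w i * w j = -(w j * w i)) (hw0 : ∀ i, w i * w i = 0)
    (hX : ∀ i j, X i * X j = -(X j * X i)) (hX0 : ∀ i, X i * X i = 0)
    (hXw : ∀ i j, X i * w j = -(w j * X i))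
    (hXC : ∀ i, X i ∈ C)
    (ber : A →ₗ[ℂ] A)
    (hber : ∀ c ∈ C, ∀ I, ber (c * gmonomial w I) = if I = Finset.univ then c else 0)
    (d : A) (hdC : d ∈ C) (B : Finset (Fin (2*n))) :
    ber ((d * gmonomial w B) * gexp (4*n+1) (∑ i, X i * w i)) =
      (gsigma Bᶜ.card * (-1:ℤ)^(B.card * Bᶜ.card + ginv B Bᶜ)) • (d * gmonomial X Bᶜ) := by
  have hwX : ∀ i j, w i * X j = -(X j * w i) := by
    intro i j
    rw [eq_comm, neg_eq_iff_eq_neg, ← hXw j i]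
  have h1 : ∀ i j, (X i * w i) * (X j * w j) = -(X i * X j * (w i * w j)) := by
    intro i j
    rw [mul_assoc, ← mul_assoc (w i), hwX i j, neg_mul, mul_neg,
      mul_assoc (X j), ← mul_assoc (X i), ← mul_assoc (X i * X j)]
  have hpair : ∀ i j, Commute (X i * w i) (X j * w j) := by
    intro i j
    show (X i * w i) * (X j * w j) = (X j * w j) * (X i * w i)
    rw [h1 i j, h1 j i, hX i j, hw i j, neg_mul, mul_neg, neg_neg]
  have hpair0 : ∀ i, (X i * w i) * (X i * w i) = 0 := by
    intro i
    rw [h1 i i, hX0 i, zero_mul, neg_zero]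
  rw [gexp_sum hpair hpair0 (by omega : 2*n < 4*n+1),
    Finset.sum_congr rfl (fun S _ => gmonomial_pair hXw S), Finset.mul_sum, map_sum]
  have hterm : ∀ S : Finset (Fin (2*n)),
      ber ((d * gmonomial w B) * (gsigma S.card • (gmonomial X S * gmonomial w S)))
        = if S = Bᶜ then
            (gsigma Bᶜ.card * (-1:ℤ)^(B.card * Bᶜ.card + ginv B Bᶜ)) • (d * gmonomial X Bᶜ)
          else 0 := by
    intro S
    rw [mul_smul_comm, map_zsmul]
    have hin : (d * gmonomial w B) * (gmonomial X S * gmonomial w S)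
        = ((-1:ℤ)^(B.card * S.card)) •
            ((d * gmonomial X S) * (gmonomial w B * gmonomial w S)) := by
      rw [mul_assoc, ← mul_assoc (gmonomial w B), gmonomial_pass hXw B S,
        smul_mul_assoc, mul_smul_comm, mul_assoc (gmonomial X S), ← mul_assoc d]
    rw [hin, map_zsmul, gmonomial_mul hw hw0 B S]
    by_cases hdis : Disjoint B S
    · rw [if_pos hdis, mul_smul_comm, map_zsmul,
        hber (d * gmonomial X S) (mul_mem hdC (gmonomial_mem hXC S)) (B ∪ S)]
      by_cases hSc : S = Bᶜ
      · subst hSc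
        rw [if_pos (union_compl B), if_pos rfl, smul_smul, smul_smul, mul_assoc, ← pow_add]
      · have hne : ¬ (B ∪ S = univ) := fun hu => hSc (eq_compl_of_disjoint_union hdis hu)
        rw [if_neg hne, if_neg hSc, smul_zero, smul_zero, smul_zero]
    · have hSc : ¬ (S = Bᶜ) := by
        rintro rfl
        exact hdis (disjoint_compl_right)
      rw [if_neg hdis, mul_zero, map_zero, smul_zero, smul_zero, if_neg hSc]
  rw [Finset.sum_congr rfl fun S _ => hterm S, Finset.sum_ite_eq' univ Bᶜ,
    if_pos (mem_univ _)]


lemma conv_expand {A : Type*} [Ring A] [Algebra ℂ A] {m : ℕ} (C : Subring A)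
    (θ η : Fin m → A)
    (hθ : ∀ i j, θ i * θ j = -(θ j * θ i)) (hθ0 : ∀ i, θ i * θ i = 0)
    (hηθ : ∀ i j, η i * θ j = -(θ j * η i))
    (hηC : ∀ i, η i ∈ C)
    (f f' : Finset (Fin m) → A)
    (hfC : ∀ I, f I ∈ C) (hf'C : ∀ I, f' I ∈ C)
    (hf'central : ∀ I a, f' I * a = a * f' I)
    (ber : A →ₗ[ℂ] A)
    (hber : ∀ c ∈ C, ∀ I, ber (c * gmonomial θ I) = if I = Finset.univ then c else 0) :
    ber (gevalP f θ * gevalP f' (fun i => η i - θ i))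
      = ∑ I : Finset (Fin m), ∑ J : Finset (Fin m),
          (if Iᶜ ⊆ J then
            ((-1:ℤ)^(Iᶜ.card + ginv (J \ Iᶜ) Iᶜ) *
              ((-1:ℤ)^(I.card * (J \ Iᶜ).card) * (-1:ℤ)^(ginv I Iᶜ))) •
              (f I * f' J * gmonomial η (J \ Iᶜ))
          else 0) := by
  have hθη : ∀ i j, θ i * η j = -(η j * θ i) := by
    intro i j; rw [eq_comm, neg_eq_iff_eq_neg, ← hηθ j i]
  simp only [gevalP]
  rw [Finset.sum_mul_sum, map_sum]
  refine Finset.sum_congr rfl fun I _ => ?_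
  rw [map_sum]
  refine Finset.sum_congr rfl fun J _ => ?_
  rw [gmonomial_sub hθη J, Finset.mul_sum, Finset.mul_sum, map_sum]
  have hK : ∀ K ∈ J.powerset,
      ber ((f I * gmonomial θ I) * (f' J * (((-1:ℤ)^(K.card + ginv (J \ K) K)) •
          (gmonomial η (J \ K) * gmonomial θ K))))
        = if K = Iᶜ then
            ((-1:ℤ)^(K.card + ginv (J \ K) K) *
              ((-1:ℤ)^(I.card * (J \ K).card) * (-1:ℤ)^(ginv I K))) •
              (f I * f' J * gmonomial η (J \ K))
          else 0 := by
    intro K _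
    rw [mul_smul_comm, mul_smul_comm, map_zsmul, central_shuffle (hf'central J),
      ← mul_assoc (gmonomial θ I), gmonomial_pass hηθ I (J \ K),
      smul_mul_assoc, mul_smul_comm, map_zsmul, mul_assoc (gmonomial η (J \ K)),
      gmonomial_mul hθ hθ0 I K]
    by_cases hd : Disjoint I K
    · rw [if_pos hd, mul_smul_comm, mul_smul_comm, map_zsmul, ← mul_assoc (f I * f' J),
        hber _ (mul_mem (mul_mem (hfC I) (hf'C J)) (gmonomial_mem hηC _)) (I ∪ K)]
      by_cases hKc : K = Iᶜ
      · subst hKc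
        rw [if_pos (union_compl I), if_pos rfl, smul_smul, smul_smul, mul_assoc]
      · have hne : ¬ (I ∪ K = univ) := fun hu => hKc (eq_compl_of_disjoint_union hd hu)
        rw [if_neg hne, if_neg hKc, smul_zero, smul_zero, smul_zero]
    · have hKc : ¬ (K = Iᶜ) := by
        rintro rfl
        exact hd disjoint_compl_right
      rw [if_neg hd, mul_zero, mul_zero, map_zero, smul_zero, smul_zero, if_neg hKc]
  rw [Finset.sum_congr rfl hK, Finset.sum_ite_eq' J.powerset Iᶜ]
  simp only [Finset.mem_powerset]


set_option maxHeartbeats 1000000 in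
lemma parity_key {n : ℕ} (p q a b j g1 g2 g3 g4 : ℕ)
    (h1 : a + p = 2*n) (h2 : j + q = 2*n) (h3 : b + (p + q) = 2*n) :
    ((-1:ℤ)^(p + g1) * ((-1:ℤ)^(a*b) * (-1:ℤ)^g2)) *
        (gsigma (p+q) * (-1:ℤ)^(b*(p+q) + (g1 + g3)))
      = (gsigma p * (-1:ℤ)^(a*p + g2)) * (gsigma q * (-1:ℤ)^(j*q + (g3 + g4)))
          * (-1:ℤ)^g4 := by
  rw [gsigma_add]
  have hE : ((-1:ℤ))^(p + g1 + a*b + g2 + p*q + (b*(p+q) + (g1 + g3)))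
      = (-1:ℤ)^(a*p + g2 + (j*q + (g3 + g4)) + g4) := by
    refine neg_one_pow_eq_of_even_add ?_
    have hre : (p + g1 + a*b + g2 + p*q + (b*(p+q) + (g1 + g3)) +
        (a*p + g2 + (j*q + (g3 + g4)) + g4))
        = 2*(g1+g2+g3+g4) + (p + a*b + p*q + b*(p+q) + (a*p + j*q)) := by ring
    rw [hre, Nat.even_add]
    have h2s : Even (2*(g1+g2+g3+g4)) := even_two_mul _
    simp only [h2s, true_iff]
    simp only [Nat.even_add, Nat.even_mul]
    simp only [Nat.even_iff]
    omega
  calc ((-1:ℤ)^(p + g1) * ((-1:ℤ)^(a*b) * (-1:ℤ)^g2)) *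
        ((gsigma p * gsigma q * (-1:ℤ)^(p*q)) * (-1:ℤ)^(b*(p+q) + (g1 + g3)))
      = gsigma p * gsigma q *
          (-1:ℤ)^(p + g1 + a*b + g2 + p*q + (b*(p+q) + (g1 + g3))) := by ring
    _ = gsigma p * gsigma q * (-1:ℤ)^(a*p + g2 + (j*q + (g3 + g4)) + g4) := by rw [hE]
    _ = (gsigma p * (-1:ℤ)^(a*p + g2)) * (gsigma q * (-1:ℤ)^(j*q + (g3 + g4)))
          * (-1:ℤ)^g4 := by ring

end GrassmannAux

open GrassmannAux Finset in
/-- Grassmann convolution theorem: for two Grassmann polynomials `f`, `f'` in `2n`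
Grassmann variables (with even coefficients in the ambient coefficient algebra),
with convolution `(f * f')(xi) = int deta f(eta) f'(xi - eta)` and Fourier
transform `(F f)(xi) = int deta f(eta) exp(sum_i xi_i* eta_i)` (where `*` is the
conjugation of the coefficient algebra), one has `F(f conv f') = (F f) (F f')`.
Here `theta` is the inner integration variable (with Berezin integral `ber_theta`),
`eta` the outer one (with Berezin integral `ber_eta`), and the identity is
evaluated at the odd vector `xi`. -/
theorem grassmann_convolution_theorem
    {A : Type*} [Ring A] [Algebra ℂ A] [StarRing A] (Cθ Cη : Subring A) (n : ℕ)
    (θ η ξ : Fin (2 * n) → A)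
    (hθ : ∀ i j, θ i * θ j = -(θ j * θ i)) (hθ0 : ∀ i, θ i * θ i = 0)
    (hη : ∀ i j, η i * η j = -(η j * η i)) (hη0 : ∀ i, η i * η i = 0)
    (hηθ : ∀ i j, η i * θ j = -(θ j * η i))
    (hξ : ∀ i j, star (ξ i) * star (ξ j) = -(star (ξ j) * star (ξ i)))
    (hξ0 : ∀ i, star (ξ i) * star (ξ i) = 0)
    (hξθ : ∀ i j, star (ξ i) * θ j = -(θ j * star (ξ i)))
    (hξη : ∀ i j, star (ξ i) * η j = -(η j * star (ξ i)))
    (hηCθ : ∀ i, η i ∈ Cθ) (hξCθ : ∀ i, star (ξ i) ∈ Cθ)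
    (hξCη : ∀ i, star (ξ i) ∈ Cη)
    (f f' : Finset (Fin (2 * n)) → A)
    (hfCθ : ∀ I, f I ∈ Cθ) (hfCη : ∀ I, f I ∈ Cη)
    (hf'Cθ : ∀ I, f' I ∈ Cθ) (hf'Cη : ∀ I, f' I ∈ Cη)
    (hfcentral : ∀ I a, f I * a = a * f I)
    (hf'central : ∀ I a, f' I * a = a * f' I)
    (berθ berη : A →ₗ[ℂ] A)
    (hberθ : ∀ c ∈ Cθ, ∀ I : Finset (Fin (2 * n)),
      berθ (c * gmonomial θ I) = if I = Finset.univ then c else 0)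
    (hberη : ∀ c ∈ Cη, ∀ I : Finset (Fin (2 * n)),
      berη (c * gmonomial η I) = if I = Finset.univ then c else 0) :
    berη (berθ (gevalP f θ * gevalP f' (fun i => η i - θ i)) *
        gexp (4 * n + 1) (∑ i, star (ξ i) * η i)) =
      berη (gevalP f η * gexp (4 * n + 1) (∑ i, star (ξ i) * η i)) *
        berθ (gevalP f' θ * gexp (4 * n + 1) (∑ i, star (ξ i) * θ i)) := by
  classical
  set X : Fin (2*n) → A := fun i => star (ξ i) with hXdef
  -- Fourier transforms on the right-hand side
  have hFη : berη (gevalP f η * gexp (4 * n + 1) (∑ i, X i * η i))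
      = ∑ I : Finset (Fin (2*n)),
          (gsigma Iᶜ.card * (-1:ℤ)^(I.card * Iᶜ.card + ginv I Iᶜ)) •
            (f I * gmonomial X Iᶜ) := by
    simp only [gevalP]
    rw [Finset.sum_mul, map_sum]
    exact Finset.sum_congr rfl fun I _ =>
      berezin_key Cη X η hη hη0 hξ hξ0 hξη hξCη berη hberη (f I) (hfCη I) I
  have hFθ : berθ (gevalP f' θ * gexp (4 * n + 1) (∑ i, X i * θ i))
      = ∑ J : Finset (Fin (2*n)),
          (gsigma Jᶜ.card * (-1:ℤ)^(J.card * Jᶜ.card + ginv J Jᶜ)) •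
            (f' J * gmonomial X Jᶜ) := by
    simp only [gevalP]
    rw [Finset.sum_mul, map_sum]
    exact Finset.sum_congr rfl fun J _ =>
      berezin_key Cθ X θ hθ hθ0 hξ hξ0 hξθ hξCθ berθ hberθ (f' J) (hf'Cθ J) J
  rw [hFη, hFθ, conv_expand Cθ θ η hθ hθ0 hηθ hηCθ f f' hfCθ hf'Cθ hf'central berθ hberθ,
    Finset.sum_mul_sum, Finset.sum_mul, map_sum]
  refine Finset.sum_congr rfl fun I _ => ?_
  rw [Finset.sum_mul, map_sum]
  refine Finset.sum_congr rfl fun J _ => ?_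
  -- right-hand side term
  have hR : ((gsigma Iᶜ.card * (-1:ℤ)^(I.card * Iᶜ.card + ginv I Iᶜ)) •
          (f I * gmonomial X Iᶜ)) *
        ((gsigma Jᶜ.card * (-1:ℤ)^(J.card * Jᶜ.card + ginv J Jᶜ)) •
          (f' J * gmonomial X Jᶜ))
      = if Disjoint Iᶜ Jᶜ then
          ((gsigma Iᶜ.card * (-1:ℤ)^(I.card * Iᶜ.card + ginv I Iᶜ)) *
            (gsigma Jᶜ.card * (-1:ℤ)^(J.card * Jᶜ.card + ginv J Jᶜ)) *
              (-1:ℤ)^(ginv Iᶜ Jᶜ)) •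
            ((f I * f' J) * gmonomial X (Iᶜ ∪ Jᶜ))
        else 0 := by
    rw [smul_mul_assoc, mul_smul_comm, smul_smul, central_shuffle (hf'central J),
      gmonomial_mul hξ hξ0 Iᶜ Jᶜ]
    by_cases hdisj : Disjoint Iᶜ Jᶜ
    · rw [if_pos hdisj, if_pos hdisj, mul_smul_comm, smul_smul]
    · rw [if_neg hdisj, if_neg hdisj, mul_zero, smul_zero]
  rw [hR]
  by_cases hIJ : Iᶜ ⊆ J
  · have hdisj : Disjoint Iᶜ Jᶜ := by
      rw [Finset.disjoint_left]
      intro x hx hx'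
      exact (Finset.mem_compl.1 hx') (hIJ hx)
    have hkey := berezin_key Cη X η hη hη0 hξ hξ0 hξη hξCη berη hberη (f I * f' J)
      (mul_mem (hfCη I) (hf'Cη J)) (J \ Iᶜ)
    rw [if_pos hIJ, if_pos hdisj, smul_mul_assoc, map_zsmul, hkey, smul_smul]
    have hBc : (J \ Iᶜ)ᶜ = Iᶜ ∪ Jᶜ := by
      ext x
      simp only [Finset.mem_compl, Finset.mem_sdiff, Finset.mem_union]
      tauto
    rw [hBc]
    congr 1
    -- scalar identity
    have hcard : (Iᶜ ∪ Jᶜ).card = Iᶜ.card + Jᶜ.card := card_union_of_disjoint hdisj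
    have hBI : Disjoint (J \ Iᶜ) Iᶜ := sdiff_disjoint
    have hJsplit : (J \ Iᶜ) ∪ Iᶜ = J := sdiff_union_of_subset hIJ
    have hg1 : ginv (J \ Iᶜ) (Iᶜ ∪ Jᶜ) = ginv (J \ Iᶜ) Iᶜ + ginv (J \ Iᶜ) Jᶜ :=
      ginv_union_right _ hdisj
    have hg2 : ginv J Jᶜ = ginv (J \ Iᶜ) Jᶜ + ginv Iᶜ Jᶜ := by
      have h := ginv_union_left hBI Jᶜ
      rw [hJsplit] at h
      exact h
    have hbI : I.card + Iᶜ.card = 2*n := by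
      rw [Finset.card_add_card_compl]
      exact Fintype.card_fin _
    have hbJ : J.card + Jᶜ.card = 2*n := by
      rw [Finset.card_add_card_compl]
      exact Fintype.card_fin _
    have hbB : (J \ Iᶜ).card + (Iᶜ.card + Jᶜ.card) = 2*n := by
      have h := Finset.card_add_card_compl (J \ Iᶜ)
      rw [hBc, hcard] at h
      rw [h]
      exact Fintype.card_fin _
    rw [hcard, hg1, hg2]
    exact parity_key Iᶜ.card Jᶜ.card I.card (J \ Iᶜ).card J.card
      (ginv (J \ Iᶜ) Iᶜ) (ginv I Iᶜ) (ginv (J \ Iᶜ) Jᶜ) (ginv Iᶜ Jᶜ) hbI hbJ hbB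
  · have hnd : ¬ Disjoint Iᶜ Jᶜ := by
      intro hd
      refine hIJ fun x hx => ?_
      have := Finset.disjoint_left.1 hd hx
      simpa using this
    rw [if_neg hIJ, if_neg hnd, zero_mul, map_zero]
end
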